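/- Let P be a reversible stochastic matrix whose associated graph G_P has normalized diameter δ_*(G_P) = min_{k≥1} δ_k(G_P)/k, where δ_k is the k-diameter, and let α(P) = min over edges (i,j) of G_P of π_i P_{ij}. Then every eigenvalue of P other than 1 is at most 1 − α(P)/δ_*(G_P). -/

import Mathlib

open Finset Matrix ENNReal

def IsStochastic {n : ℕ} (P : Matrix (Fin n) (Fin n) ℝ) : Prop :=
  (∀ i j, 0 ≤ P i j) ∧ ∀ i, ∑ j, P i j = 1

def IsIrreducibleM {n : ℕ} (P : Matrix (Fin n) (Fin n) ℝ) : Prop :=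
  ∀ i j, ∃ k : ℕ, 0 < (P ^ k) i j

def IsReversible {n : ℕ} (π : Fin n → ℝ) (P : Matrix (Fin n) (Fin n) ℝ) : Prop :=
  ∀ i j, π i * P i j = π j * P j i

/-- A list of vertices is a directed path from `i` to `j` in the graph of `P`. -/
def IsPathFrom {n : ℕ} (P : Matrix (Fin n) (Fin n) ℝ) (i j : Fin n)
    (l : List (Fin n)) : Prop :=
  l.head? = some i ∧ l.getLast? = some j ∧ 2 ≤ l.length ∧
    ∀ e ∈ l.zip l.tail, 0 < P e.1 e.2

/-- The paths in `Γ` are pairwise edge-disjoint. -/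
def EdgeDisjointFamily {n : ℕ} (Γ : Finset (List (Fin n))) : Prop :=
  ∀ γ₁ ∈ Γ, ∀ γ₂ ∈ Γ, γ₁ ≠ γ₂ → ∀ e : Fin n × Fin n,
    e ∈ γ₁.zip γ₁.tail → e ∉ γ₂.zip γ₂.tail

/-- The `k`-distance `d_k(i,j)`: the minimum, over sets of `k` pairwise edge-disjoint
paths from `i` to `j`, of the maximum length of a path in the set (`∞` if none exists). -/
noncomputable def kDist {n : ℕ} (P : Matrix (Fin n) (Fin n) ℝ) (k : ℕ)
    (i j : Fin n) : ℝ≥0∞ :=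
  sInf {D : ℝ≥0∞ | ∃ Γ : Finset (List (Fin n)), Γ.card = k ∧
    (∀ γ ∈ Γ, IsPathFrom P i j γ) ∧ EdgeDisjointFamily Γ ∧
    D = Γ.sup (fun γ => ((γ.length - 1 : ℕ) : ℝ≥0∞))}

/-- The `k`-diameter `δ_k(G_P)`. -/
noncomputable def kDiam {n : ℕ} (P : Matrix (Fin n) (Fin n) ℝ) (k : ℕ) : ℝ≥0∞ :=
  sSup {D : ℝ≥0∞ | ∃ i j : Fin n, i ≠ j ∧ D = kDist P k i j}

/-- The normalized diameter `δ_*(G_P) = min_{k ≥ 1} δ_k(G_P)/k`. -/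
noncomputable def normDiam {n : ℕ} (P : Matrix (Fin n) (Fin n) ℝ) : ℝ≥0∞ :=
  ⨅ (k : ℕ) (_ : 1 ≤ k), kDiam P k / (k : ℝ≥0∞)

/-- `α(P) = min over edges (i,j) of π_i P_{ij}`. -/
noncomputable def alphaP {n : ℕ} (π : Fin n → ℝ) (P : Matrix (Fin n) (Fin n) ℝ) : ℝ :=
  sInf {a : ℝ | ∃ i j, 0 < P i j ∧ a = π i * P i j}

namespace GeomBoundAux
variable {V : Type*}

lemma edges_sublist_of_suffix (l₁ l₂ : List V) (h : l₁.IsSuffix l₂) :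
    (l₁.zip l₁.tail).Sublist (l₂.zip l₂.tail) := by
  obtain ⟨u, rfl⟩ := h
  induction u with
  | nil => simp
  | cons a u ih =>
    rcases eq_or_ne (u ++ l₁) [] with h | h
    · rcases List.append_eq_nil_iff.mp h with ⟨rfl, rfl⟩
      simp
    · rw [List.cons_append]
      have key : ((u ++ l₁).zip (u ++ l₁).tail).Sublist
          ((a :: (u ++ l₁)).zip (a :: (u ++ l₁)).tail) := by
        cases hm : u ++ l₁ with
        | nil => simp
        | cons b t => exact List.sublist_cons_self _ _
      exact ih.trans key

lemma edges_nodup_of_nodup : ∀ {l : List V}, l.Nodup → (l.zip l.tail).Nodup := by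
  intro l
  induction l with
  | nil => simp
  | cons a m ih =>
    intro h
    cases m with
    | nil => simp
    | cons b t =>
      rw [show ((a :: b :: t).zip (a :: b :: t).tail) = (a, b) :: ((b :: t).zip t) from rfl]
      refine List.nodup_cons.mpr ⟨?_, ?_⟩
      · intro hmem
        exact (List.nodup_cons.mp h).1 (List.of_mem_zip hmem).1
      · exact ih (List.nodup_cons.mp h).2

lemma telescope (f : V → ℝ) : ∀ (l : List V) (i j : V), l.head? = some i →
    l.getLast? = some j →
    ((l.zip l.tail).map (fun e => f e.1 - f e.2)).sum = f i - f j
  | [], i, j => by simp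
  | [a], i, j => by
    intro h1 h2
    simp only [List.head?_cons, Option.some_inj] at h1
    simp only [List.getLast?_singleton, Option.some_inj] at h2
    subst h1; subst h2; simp
  | a :: b :: t, i, j => by
    intro h1 h2
    simp only [List.head?_cons, Option.some_inj] at h1
    rw [List.getLast?_cons_cons] at h2
    have ih := telescope f (b :: t) b j rfl h2
    rw [show ((a :: b :: t).zip (a :: b :: t).tail)
        = (a, b) :: ((b :: t).zip (b :: t).tail) from rfl,
      List.map_cons, List.sum_cons, ih, ← h1]
    ring

lemma exists_nodup_subpath [DecidableEq V] : ∀ (l : List V), ∃ l' : List V,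
    l'.Nodup ∧ l'.head? = l.head? ∧ l'.getLast? = l.getLast? ∧
    (∀ v ∈ l', v ∈ l) ∧ (∀ e ∈ l'.zip l'.tail, e ∈ l.zip l.tail)
  | [] => ⟨[], by simp⟩
  | a :: m => by
    by_cases ha : a ∈ m
    · obtain ⟨s, t, rfl⟩ := List.append_of_mem ha
      obtain ⟨l', h1, h2, h3, h4, h5⟩ := exists_nodup_subpath (a :: t)
      have hsuf : (a :: t).IsSuffix (a :: (s ++ a :: t)) := ⟨a :: s, by simp⟩
      refine ⟨l', h1, ?_, ?_, ?_, ?_⟩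
      · rw [h2]; rfl
      · rw [h3]
        rw [show (a :: (s ++ a :: t)) = (a :: s) ++ (a :: t) from by simp]
        exact (List.getLast?_append_of_ne_nil _ (by simp)).symm
      · exact fun v hv => hsuf.subset (h4 v hv)
      · exact fun e he => (edges_sublist_of_suffix _ _ hsuf).subset (h5 e he)
    · obtain ⟨l', h1, h2, h3, h4, h5⟩ := exists_nodup_subpath m
      cases m with
      | nil => exact ⟨[a], by simp⟩
      | cons b t =>
        have hl'ne : l' ≠ [] := by
          intro h; rw [h] at h2; simp at h2
        refine ⟨a :: l', ?_, ?_, ?_, ?_, ?_⟩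
        · exact List.nodup_cons.mpr ⟨fun hc => ha (h4 a hc), h1⟩
        · rfl
        · rw [List.getLast?_cons_cons, ← h3]
          cases l' with
          | nil => exact absurd rfl hl'ne
          | cons c u => rw [List.getLast?_cons_cons]
        · intro v hv
          rcases List.mem_cons.mp hv with rfl | hv
          · exact List.mem_cons_self
          · exact List.mem_cons_of_mem a (h4 v hv)
        · intro e he
          cases l' with
          | nil => exact absurd rfl hl'ne
          | cons c u =>
            rw [show ((a :: c :: u).zip (a :: c :: u).tail)
                = (a, c) :: ((c :: u).zip (c :: u).tail) from rfl] at he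
            rcases List.mem_cons.mp he with rfl | he
            · have hb : c = b := by simpa using h2
              subst hb
              exact List.mem_cons_self
            · exact (edges_sublist_of_suffix (b :: t) (a :: b :: t)
                ⟨[a], rfl⟩).subset (h5 e he)
  termination_by l => l.length
  decreasing_by
  all_goals (simp_all only [List.length_cons, List.length_append]; omega)

end GeomBoundAux

set_option maxHeartbeats 1600000 in
theorem eigenvalue_le_geometric_bound {n : ℕ} (hn : 2 ≤ n)
    (P : Matrix (Fin n) (Fin n) ℝ) (π : Fin n → ℝ)
    (hP : IsStochastic P) (hirr : IsIrreducibleM P)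
    (hπpos : ∀ i, 0 < π i) (hπsum : ∑ i, π i = 1)
    (hrev : IsReversible π P) :
    ∀ (l : ℝ) (x : Fin n → ℝ), x ≠ 0 → P.mulVec x = l • x → l ≠ 1 →
      l ≤ 1 - alphaP π P / (normDiam P).toReal := by
  classical
  haveI : NeZero n := ⟨by omega⟩
  intro l x hx hPx hl1
  obtain ⟨hPnn, hProw⟩ := hP
  have hmv : ∀ i, P.mulVec x i = ∑ j, P i j * x j := fun i => by
    simp [Matrix.mulVec, dotProduct]
  have hPf : ∀ i, ∑ j, P i j * x j = l * x i := fun i => by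
    rw [← hmv i, hPx]; rfl
  -- Case A: l ≤ 1
  have hl_le_one : l ≤ 1 := by
    obtain ⟨i, -, hi⟩ := Finset.exists_max_image Finset.univ (fun i => |x i|)
      ⟨0, Finset.mem_univ _⟩
    have hxi : 0 < |x i| := by
      by_contra h
      push_neg at h
      apply hx
      funext j
      have h2 : |x j| ≤ 0 := le_trans (hi j (Finset.mem_univ j)) h
      have : |x j| = 0 := le_antisymm h2 (abs_nonneg _)
      simpa [abs_eq_zero] using this
    have key : |l| * |x i| ≤ 1 * |x i| := by
      calc |l| * |x i| = |l * x i| := (abs_mul l (x i)).symm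
        _ = |∑ j, P i j * x j| := by rw [hPf i]
        _ ≤ ∑ j, |P i j * x j| := Finset.abs_sum_le_sum_abs _ _
        _ ≤ ∑ j, P i j * |x i| := by
            apply Finset.sum_le_sum
            intro j _
            rw [abs_mul, abs_of_nonneg (hPnn i j)]
            exact mul_le_mul_of_nonneg_left (hi j (Finset.mem_univ j)) (hPnn i j)
        _ = 1 * |x i| := by rw [← Finset.sum_mul, hProw i]
    have habs : |l| ≤ 1 := le_of_mul_le_mul_right key hxi
    exact le_trans (le_abs_self l) habs
  by_cases hδ : (normDiam P).toReal = 0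
  · rw [hδ]; simpa using hl_le_one
  -- Case B
  -- α facts
  have hSfin : ({a : ℝ | ∃ i j, 0 < P i j ∧ a = π i * P i j}).Finite := by
    apply Set.Finite.subset (Set.finite_range (fun p : Fin n × Fin n => π p.1 * P p.1 p.2))
    rintro a ⟨i, j, -, rfl⟩; exact ⟨(i, j), rfl⟩
  have hα_le : ∀ i j, 0 < P i j → alphaP π P ≤ π i * P i j := fun i j h =>
    csInf_le hSfin.bddBelow ⟨i, j, h, rfl⟩
  have hSne : ({a : ℝ | ∃ i j, 0 < P i j ∧ a = π i * P i j}).Nonempty := by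
    have : ∃ j, 0 < P 0 j := by
      by_contra h
      push_neg at h
      have : ∀ j, P 0 j = 0 := fun j => le_antisymm (h j) (hPnn 0 j)
      have h1 := hProw 0
      rw [Finset.sum_congr rfl (fun j _ => this j)] at h1
      simp at h1
    obtain ⟨j, hj⟩ := this
    exact ⟨π 0 * P 0 j, 0, j, hj, rfl⟩
  have hαpos : 0 < alphaP π P := by
    obtain ⟨i, j, hij, he⟩ := hSne.csInf_mem hSfin
    rw [alphaP, he]
    exact mul_pos (hπpos i) hij
  -- matrix identities
  have hcol : ∀ j, ∑ i, π i * P i j = π j := fun j => by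
    calc ∑ i, π i * P i j = ∑ i, π j * P j i := Finset.sum_congr rfl (fun i _ => hrev i j)
      _ = π j * ∑ i, P j i := by rw [Finset.mul_sum]
      _ = π j := by rw [hProw j, mul_one]
  set Vr := ∑ i, π i * x i ^ 2 with hVr
  have hS0 : ∑ i, π i * x i = 0 := by
    have h1 : ∑ i, π i * (l * x i) = ∑ i, π i * x i := by
      calc ∑ i, π i * (l * x i) = ∑ i, π i * ∑ j, P i j * x j :=
            Finset.sum_congr rfl (fun i _ => by rw [hPf i])
        _ = ∑ i, ∑ j, π i * P i j * x j := by
            refine Finset.sum_congr rfl (fun i _ => ?_)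
            rw [Finset.mul_sum]
            exact Finset.sum_congr rfl (fun j _ => by ring)
        _ = ∑ j, ∑ i, π i * P i j * x j := Finset.sum_comm
        _ = ∑ j, π j * x j := by
            refine Finset.sum_congr rfl (fun j _ => ?_)
            rw [← Finset.sum_mul, hcol j]
    have h2 : ∑ i, π i * (l * x i) = l * ∑ i, π i * x i := by
      rw [Finset.mul_sum]
      exact Finset.sum_congr rfl (fun i _ => by ring)
    have h3 : (l - 1) * ∑ i, π i * x i = 0 := by rw [sub_mul, ← h2, h1]; ring
    rcases mul_eq_zero.mp h3 with h | h
    · exact absurd (by linarith [sub_eq_zero.mp h]) hl1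
    · exact h
  have hVpos : 0 < Vr := by
    have hne : ∃ i, x i ≠ 0 := by
      by_contra h
      push_neg at h
      exact hx (funext h)
    obtain ⟨i0, hi0⟩ := hne
    refine Finset.sum_pos' (fun i _ => mul_nonneg (hπpos i).le (sq_nonneg _)) ⟨i0, Finset.mem_univ _, ?_⟩
    exact mul_pos (hπpos i0) (by positivity)
  have hE : ∑ i, ∑ j, π i * P i j * (x i - x j) ^ 2 = 2 * (1 - l) * Vr := by
    have key : ∀ i, ∑ j, π i * P i j * (x i - x j) ^ 2
        = (π i * x i ^ 2) * 1 - (2 * (π i * x i)) * (l * x i) + ∑ j, π i * P i j * x j ^ 2 := by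
      intro i
      have e1 : ∀ j, π i * P i j * (x i - x j) ^ 2
          = (π i * x i ^ 2) * P i j - (2 * (π i * x i)) * (P i j * x j) + π i * P i j * x j ^ 2 :=
        fun j => by ring
      rw [Finset.sum_congr rfl (fun j _ => e1 j), Finset.sum_add_distrib,
        Finset.sum_sub_distrib, ← Finset.mul_sum, ← Finset.mul_sum, hProw i, hPf i]
    rw [Finset.sum_congr rfl (fun i _ => key i), Finset.sum_add_distrib]
    have e2 : ∑ i, ∑ j, π i * P i j * x j ^ 2 = Vr := by
      rw [Finset.sum_comm, hVr]
      refine Finset.sum_congr rfl (fun j _ => ?_)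
      rw [← Finset.sum_mul, hcol j]
    have e3 : ∑ i, ((π i * x i ^ 2) * 1 - (2 * (π i * x i)) * (l * x i))
        = (1 - 2 * l) * Vr := by
      rw [hVr, Finset.mul_sum]
      exact Finset.sum_congr rfl (fun i _ => by ring)
    rw [e2, e3]
    ring
  have hVar : ∑ i, ∑ j, π i * π j * (x i - x j) ^ 2 = 2 * Vr := by
    have key : ∀ i, ∑ j, π i * π j * (x i - x j) ^ 2
        = (π i * x i ^ 2) * 1 - (2 * (π i * x i)) * 0 + π i * Vr := by
      intro i
      have e1 : ∀ j, π i * π j * (x i - x j) ^ 2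
          = (π i * x i ^ 2) * π j - (2 * (π i * x i)) * (π j * x j) + π i * (π j * x j ^ 2) :=
        fun j => by ring
      rw [Finset.sum_congr rfl (fun j _ => e1 j), Finset.sum_add_distrib,
        Finset.sum_sub_distrib, ← Finset.mul_sum, ← Finset.mul_sum, ← Finset.mul_sum,
        hπsum, hS0, ← hVr]
    have key2 : ∀ i, (π i * x i ^ 2) * 1 - (2 * (π i * x i)) * 0 + π i * Vr
        = π i * x i ^ 2 + π i * Vr := fun i => by ring
    rw [Finset.sum_congr rfl (fun i _ => key i), Finset.sum_congr rfl (fun i _ => key2 i),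
      Finset.sum_add_distrib, ← hVr, ← Finset.sum_mul, hπsum, one_mul]
    ring
  -- normDiam is attained at some k₀ ∈ [1, n*n]
  have h01 : (0 : Fin n) ≠ (1 : Fin n) := by
    intro h
    have := congrArg Fin.val h
    rw [Fin.val_zero, Fin.val_one', Nat.mod_eq_of_lt (by omega)] at this
    omega
  have hbig : ∀ k : ℕ, n * n < k → kDiam P k = ⊤ := by
    intro k hk
    apply top_unique
    have hmem : (⊤ : ℝ≥0∞) ∈ {D : ℝ≥0∞ | ∃ i j : Fin n, i ≠ j ∧ D = kDist P k i j} := by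
      refine ⟨0, 1, h01, ?_⟩
      have hempty : {D : ℝ≥0∞ | ∃ Γ : Finset (List (Fin n)), Γ.card = k ∧
          (∀ γ ∈ Γ, IsPathFrom P 0 1 γ) ∧ EdgeDisjointFamily Γ ∧
          D = Γ.sup (fun γ => ((γ.length - 1 : ℕ) : ℝ≥0∞))} = ∅ := by
        rw [Set.eq_empty_iff_forall_notMem]
        rintro D ⟨Γ, hcard, hpath, hdisj, -⟩
        have hinj : Γ.card ≤ (Finset.univ : Finset (Fin n × Fin n)).card := by
          apply Finset.card_le_card_of_injOn (fun γ => (γ.zip γ.tail).head!)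
          · intro γ hγ; exact Finset.mem_univ _
          · intro γ₁ hγ₁ γ₂ hγ₂ heq
            by_contra hne
            have hne' : γ₁ ≠ γ₂ := hne
            have hzne : ∀ γ ∈ Γ, (γ.zip γ.tail) ≠ [] := by
              intro γ hγ hnil
              have hlen := (hpath γ hγ).2.2.1
              have : (γ.zip γ.tail).length = 0 := by rw [hnil]; rfl
              rw [List.length_zip, List.length_tail] at this
              omega
            have heq' : (γ₁.zip γ₁.tail).head! = (γ₂.zip γ₂.tail).head! := heq
            have h2 : (γ₂.zip γ₂.tail).head! ∈ γ₂.zip γ₂.tail :=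
              List.head!_mem_self (hzne γ₂ hγ₂)
            rw [← heq'] at h2
            exact hdisj γ₁ hγ₁ γ₂ hγ₂ hne' _
              (List.head!_mem_self (hzne γ₁ hγ₁)) (heq' ▸ h2)
        rw [hcard, Finset.card_univ, Fintype.card_prod, Fintype.card_fin] at hinj
        omega
      rw [kDist, hempty, sInf_empty]
    exact le_sSup hmem
  obtain ⟨k₀, hk₀mem, hk₀min⟩ := Finset.exists_min_image (Finset.Icc 1 (n * n))
    (fun k => kDiam P k / (k : ℝ≥0∞)) ⟨1, Finset.mem_Icc.mpr ⟨le_refl 1, by nlinarith⟩⟩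
  have hk₀1 : 1 ≤ k₀ := (Finset.mem_Icc.mp hk₀mem).1
  have hND : normDiam P = kDiam P k₀ / (k₀ : ℝ≥0∞) := by
    apply le_antisymm
    · exact iInf₂_le k₀ hk₀1
    · rw [normDiam]
      refine le_iInf₂ (fun k hk => ?_)
      by_cases hkn : k ≤ n * n
      · exact hk₀min k (Finset.mem_Icc.mpr ⟨hk, hkn⟩)
      · rw [hbig k (by omega), ENNReal.top_div_of_ne_top (by simp)]
        exact le_top
  have hNDne : normDiam P ≠ ⊤ := by
    intro h; rw [h] at hδ; simp at hδ
  have hkD_ne : kDiam P k₀ ≠ ⊤ := by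
    intro h
    apply hNDne
    rw [hND, h, ENNReal.top_div_of_ne_top (by simp)]
  set L : ℝ := (kDiam P k₀).toReal with hL
  have hδval : (normDiam P).toReal = L / (k₀ : ℝ) := by
    rw [hND, ENNReal.toReal_div]
    simp [hL]
  have hδpos : 0 < (normDiam P).toReal :=
    lt_of_le_of_ne ENNReal.toReal_nonneg (Ne.symm hδ)
  have hk₀R : (0 : ℝ) < (k₀ : ℝ) := by
    exact_mod_cast Nat.lt_of_lt_of_le Nat.zero_lt_one hk₀1
  have hDpos : (0 : ℝ) < L / (k₀ : ℝ) := by rw [← hδval]; exact hδpos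
  have hLnn : (0 : ℝ) ≤ L := ENNReal.toReal_nonneg
  -- choose path simplification
  obtain ⟨sfn, hsf⟩ := Classical.axiomOfChoice
    (GeomBoundAux.exists_nodup_subpath (V := Fin n))
  set g : Fin n × Fin n → ℝ := fun e => x e.1 - x e.2 with hg
  set EG : Finset (Fin n × Fin n) := Finset.univ.filter (fun e => 0 < P e.1 e.2) with hEG
  set T : ℝ := ∑ e ∈ EG, g e ^ 2 with hT
  have hTnn : 0 ≤ T := Finset.sum_nonneg (fun e _ => sq_nonneg _)
  have pair_bound : ∀ i j : Fin n, i ≠ j → (x i - x j) ^ 2 ≤ (L / (k₀ : ℝ)) * T := by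
    intro i j hij
    have h1 : kDist P k₀ i j ≤ kDiam P k₀ := le_sSup ⟨i, j, hij, rfl⟩
    set SP := {D : ℝ≥0∞ | ∃ Γ : Finset (List (Fin n)), Γ.card = k₀ ∧
      (∀ γ ∈ Γ, IsPathFrom P i j γ) ∧ EdgeDisjointFamily Γ ∧
      D = Γ.sup (fun γ => ((γ.length - 1 : ℕ) : ℝ≥0∞))} with hSP
    have hkd : kDist P k₀ i j = sInf SP := rfl
    have hcast : ∀ D ∈ SP, ∃ m : ℕ, D = (m : ℝ≥0∞) ∧ (m : ℝ≥0∞) ∈ SP := by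
      rintro D ⟨Γ, hc, hp, hd, hDeq⟩
      refine ⟨Γ.sup (fun γ => γ.length - 1), ?_, ?_⟩
      · rw [hDeq]
        rw [Finset.comp_sup_eq_sup_comp (Nat.cast : ℕ → ℝ≥0∞)
          (fun a b => Monotone.map_max (fun p q hpq => by exact_mod_cast hpq)) (by simp)]
        rfl
      · have : ((Γ.sup (fun γ => γ.length - 1) : ℕ) : ℝ≥0∞)
            = Γ.sup (fun γ => ((γ.length - 1 : ℕ) : ℝ≥0∞)) := by
          rw [Finset.comp_sup_eq_sup_comp (Nat.cast : ℕ → ℝ≥0∞)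
            (fun a b => Monotone.map_max (fun p q hpq => by exact_mod_cast hpq)) (by simp)]
          rfl
        exact ⟨Γ, hc, hp, hd, this⟩
    have hSPne : SP.Nonempty := by
      by_contra h
      rw [Set.not_nonempty_iff_eq_empty] at h
      rw [hkd, h, sInf_empty] at h1
      exact hkD_ne (top_unique h1)
    set TN : Set ℕ := {m : ℕ | (m : ℝ≥0∞) ∈ SP} with hTN
    have hTNne : TN.Nonempty := by
      obtain ⟨D, hD⟩ := hSPne
      obtain ⟨m, -, hm⟩ := hcast D hD
      exact ⟨m, hm⟩
    have hm₀mem := Nat.sInf_mem hTNne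
    set m₀ := sInf TN with hm₀
    have hm₀le : ((m₀ : ℕ) : ℝ≥0∞) ≤ kDiam P k₀ := by
      refine le_trans ?_ h1
      rw [hkd]
      apply le_sInf
      intro b hb
      obtain ⟨m, rfl, hm⟩ := hcast b hb
      exact_mod_cast Nat.sInf_le hm
    obtain ⟨Γ, hΓcard, hΓpath, hΓdisj, hΓsup⟩ := hm₀mem
    -- each path length bound
    have lenbound : ∀ γ ∈ Γ, ((γ.length - 1 : ℕ) : ℝ) ≤ L := by
      intro γ hγ
      have h2 : ((γ.length - 1 : ℕ) : ℝ≥0∞) ≤ kDiam P k₀ := by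
        refine le_trans ?_ hm₀le
        rw [hΓsup]
        exact Finset.le_sup (f := fun γ => ((γ.length - 1 : ℕ) : ℝ≥0∞)) hγ
      have h3 := ENNReal.toReal_mono hkD_ne h2
      rwa [ENNReal.toReal_natCast] at h3
    have tel : ∀ γ ∈ Γ, ∑ e ∈ ((sfn γ).zip (sfn γ).tail).toFinset, g e = x i - x j := by
      intro γ hγ
      obtain ⟨hh, hla, hlen2, hpos⟩ := hΓpath γ hγ
      obtain ⟨hn1, hn2, hn3, hn4, hn5⟩ := hsf γ
      rw [List.sum_toFinset _ (GeomBoundAux.edges_nodup_of_nodup hn1)]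
      exact GeomBoundAux.telescope x (sfn γ) i j (by rw [hn2, hh]) (by rw [hn3, hla])
    have cardE : ∀ γ ∈ Γ, ((((sfn γ).zip (sfn γ).tail).toFinset.card : ℕ) : ℝ) ≤ L := by
      intro γ hγ
      obtain ⟨hn1, hn2, hn3, hn4, hn5⟩ := hsf γ
      have hcard : ((sfn γ).zip (sfn γ).tail).toFinset.card
          = ((sfn γ).zip (sfn γ).tail).length :=
        List.toFinset_card_of_nodup (GeomBoundAux.edges_nodup_of_nodup hn1)
      have hzlen : ((sfn γ).zip (sfn γ).tail).length = (sfn γ).length - 1 := by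
        rw [List.length_zip, List.length_tail]
        omega
      have hlen_le : (sfn γ).length ≤ γ.length := by
        calc (sfn γ).length = (sfn γ).toFinset.card :=
              (List.toFinset_card_of_nodup hn1).symm
          _ ≤ γ.toFinset.card := Finset.card_le_card
              (fun v hv => List.mem_toFinset.mpr (hn4 v (List.mem_toFinset.mp hv)))
          _ ≤ γ.length := γ.toFinset_card_le
      refine le_trans ?_ (lenbound γ hγ)
      rw [hcard, hzlen]
      exact_mod_cast Nat.sub_le_sub_right hlen_le 1
    have disjE : (↑Γ : Set (List (Fin n))).PairwiseDisjoint
        (fun γ => ((sfn γ).zip (sfn γ).tail).toFinset) := by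
      intro γ₁ hγ₁ γ₂ hγ₂ hne
      rw [Function.onFun, Finset.disjoint_left]
      intro e he1 he2
      exact hΓdisj γ₁ hγ₁ γ₂ hγ₂ hne e
        ((hsf γ₁).2.2.2.2 e (List.mem_toFinset.mp he1))
        ((hsf γ₂).2.2.2.2 e (List.mem_toFinset.mp he2))
    have sum_sq_le : ∑ γ ∈ Γ, ∑ e ∈ ((sfn γ).zip (sfn γ).tail).toFinset, g e ^ 2 ≤ T := by
      rw [← Finset.sum_biUnion disjE, hT]
      apply Finset.sum_le_sum_of_subset_of_nonneg
      · intro e he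
        rw [Finset.mem_biUnion] at he
        obtain ⟨γ, hγ, he⟩ := he
        rw [List.mem_toFinset] at he
        exact Finset.mem_filter.mpr ⟨Finset.mem_univ _,
          (hΓpath γ hγ).2.2.2 e ((hsf γ).2.2.2.2 e he)⟩
      · intro e _ _; exact sq_nonneg _
    have e1 : (k₀ : ℝ) * (x i - x j)
        = ∑ γ ∈ Γ, ∑ e ∈ ((sfn γ).zip (sfn γ).tail).toFinset, g e := by
      rw [Finset.sum_congr rfl tel, Finset.sum_const, hΓcard, nsmul_eq_mul]
    have main : ((k₀ : ℝ) * (x i - x j)) ^ 2 ≤ (k₀ : ℝ) * (L * T) := by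
      rw [e1]
      calc (∑ γ ∈ Γ, ∑ e ∈ ((sfn γ).zip (sfn γ).tail).toFinset, g e) ^ 2
          ≤ Γ.card * ∑ γ ∈ Γ, (∑ e ∈ ((sfn γ).zip (sfn γ).tail).toFinset, g e) ^ 2 :=
            sq_sum_le_card_mul_sum_sq
        _ = (k₀ : ℝ) * ∑ γ ∈ Γ, (∑ e ∈ ((sfn γ).zip (sfn γ).tail).toFinset, g e) ^ 2 := by
            rw [hΓcard]
        _ ≤ (k₀ : ℝ) * ∑ γ ∈ Γ,
              (L * ∑ e ∈ ((sfn γ).zip (sfn γ).tail).toFinset, g e ^ 2) := by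
            apply mul_le_mul_of_nonneg_left _ hk₀R.le
            apply Finset.sum_le_sum
            intro γ hγ
            calc (∑ e ∈ ((sfn γ).zip (sfn γ).tail).toFinset, g e) ^ 2
                ≤ ((sfn γ).zip (sfn γ).tail).toFinset.card
                  * ∑ e ∈ ((sfn γ).zip (sfn γ).tail).toFinset, g e ^ 2 :=
                  sq_sum_le_card_mul_sum_sq
              _ ≤ L * ∑ e ∈ ((sfn γ).zip (sfn γ).tail).toFinset, g e ^ 2 :=
                  mul_le_mul_of_nonneg_right (cardE γ hγ)
                    (Finset.sum_nonneg (fun e _ => sq_nonneg _))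
        _ = (k₀ : ℝ) * (L * ∑ γ ∈ Γ, ∑ e ∈ ((sfn γ).zip (sfn γ).tail).toFinset, g e ^ 2) := by
            rw [← Finset.mul_sum]
        _ ≤ (k₀ : ℝ) * (L * T) := by
            apply mul_le_mul_of_nonneg_left _ hk₀R.le
            exact mul_le_mul_of_nonneg_left sum_sq_le hLnn
    rw [mul_pow] at main
    have hstep : (x i - x j) ^ 2 * (k₀ : ℝ) ≤ L * T := by
      have h2 : (k₀ : ℝ) * ((k₀ : ℝ) * (x i - x j) ^ 2) ≤ (k₀ : ℝ) * (L * T) := by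
        calc (k₀ : ℝ) * ((k₀ : ℝ) * (x i - x j) ^ 2) = (k₀ : ℝ) ^ 2 * (x i - x j) ^ 2 := by ring
          _ ≤ (k₀ : ℝ) * (L * T) := main
      have h3 := (mul_le_mul_iff_right₀ hk₀R).mp h2
      linarith
    rw [div_mul_eq_mul_div, le_div_iff₀ hk₀R]
    linarith
  -- final assembly
  have hCsum : ∀ C : ℝ, ∑ i, ∑ j, π i * π j * C = C := by
    intro C
    have h1 : ∀ i : Fin n, ∑ j, π i * π j * C = π i * C := by
      intro i
      calc ∑ j, π i * π j * C = ∑ j, (π i * C) * π j :=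
            Finset.sum_congr rfl (fun j _ => by ring)
        _ = (π i * C) * ∑ j, π j := by rw [← Finset.mul_sum]
        _ = π i * C := by rw [hπsum, mul_one]
    rw [Finset.sum_congr rfl (fun i _ => h1 i), ← Finset.sum_mul, hπsum, one_mul]
  have hsum2 : 2 * Vr ≤ (L / (k₀ : ℝ)) * T := by
    rw [← hVar, ← hCsum ((L / (k₀ : ℝ)) * T)]
    apply Finset.sum_le_sum
    intro i _
    apply Finset.sum_le_sum
    intro j _
    by_cases hij : i = j
    · subst hij
      have hz : π i * π i * (x i - x i) ^ 2 = 0 := by ring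
      rw [hz]
      exact mul_nonneg (mul_nonneg (hπpos i).le (hπpos i).le)
        (mul_nonneg hDpos.le hTnn)
    · exact mul_le_mul_of_nonneg_left (pair_bound i j hij)
        (mul_nonneg (hπpos i).le (hπpos j).le)
  have hαT : alphaP π P * T ≤ 2 * (1 - l) * Vr := by
    rw [← hE, hT]
    calc alphaP π P * ∑ e ∈ EG, g e ^ 2 = ∑ e ∈ EG, alphaP π P * g e ^ 2 := by
          rw [Finset.mul_sum]
      _ ≤ ∑ e ∈ EG, π e.1 * P e.1 e.2 * g e ^ 2 := by
          apply Finset.sum_le_sum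
          intro e he
          exact mul_le_mul_of_nonneg_right
            (hα_le e.1 e.2 (Finset.mem_filter.mp he).2) (sq_nonneg _)
      _ = ∑ e ∈ EG, π e.1 * P e.1 e.2 * (x e.1 - x e.2) ^ 2 := rfl
      _ ≤ ∑ e : Fin n × Fin n, π e.1 * P e.1 e.2 * (x e.1 - x e.2) ^ 2 := by
          apply Finset.sum_le_sum_of_subset_of_nonneg (Finset.subset_univ _)
          intro e _ _
          exact mul_nonneg (mul_nonneg (hπpos _).le (hPnn _ _)) (sq_nonneg _)
      _ = ∑ i, ∑ j, π i * P i j * (x i - x j) ^ 2 := Fintype.sum_prod_type _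
  have hfinal : alphaP π P ≤ (L / (k₀ : ℝ)) * (1 - l) := by
    nlinarith [mul_le_mul_of_nonneg_left hsum2 hαpos.le,
      mul_le_mul_of_nonneg_left hαT hDpos.le, hVpos]
  rw [hδval]
  have h4 : alphaP π P / (L / (k₀ : ℝ)) ≤ 1 - l := by
    rw [div_le_iff₀ hDpos]
    calc alphaP π P ≤ (L / (k₀ : ℝ)) * (1 - l) := hfinal
      _ = (1 - l) * (L / (k₀ : ℝ)) := by ring
  linarith
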